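/- Let M be a multiplication meet irreducible R-module. Then the family B_M of coprime cosets m + N, where m ∈ M and N is a nonzero submodule with N + Rm = M, is the basis for a topology on M. -/
import Mathlib


open Pointwise

set_option maxHeartbeats 1000000 in
/-- If `M` is a multiplication meet irreducible module, then the family of coprime
cosets is a basis for a topology on `M`. -/
theorem coprime_cosets_isBasis_of_multiplication
    {R M : Type*} [CommRing R] [AddCommGroup M] [Module R M] [Nontrivial M]
    (hmul : ∀ N : Submodule R M, ∃ I : Ideal R, N = I • (⊤ : Submodule R M))
    (hmi : ∀ K L : Submodule R M, K ≠ ⊥ → L ≠ ⊥ → K ⊓ L ≠ ⊥) :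
    letI B : Set (Set M) := {S | ∃ (m : M) (N : Submodule R M),
      N ≠ ⊥ ∧ N ⊔ Submodule.span R {m} = ⊤ ∧ S = m +ᵥ (N : Set M)}
    @TopologicalSpace.IsTopologicalBasis M (TopologicalSpace.generateFrom B) B := by
  show @TopologicalSpace.IsTopologicalBasis M (TopologicalSpace.generateFrom _) _
  refine @TopologicalSpace.IsTopologicalBasis.mk M (TopologicalSpace.generateFrom _) _ ?_ ?_ rfl
  · rintro t₁ ⟨m₁, N₁, hN₁, hc₁, rfl⟩ t₂ ⟨m₂, N₂, hN₂, hc₂, rfl⟩ x ⟨hx₁, hx₂⟩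
    rw [Set.mem_vadd_set_iff_neg_vadd_mem] at hx₁ hx₂
    have hx₁' : x - m₁ ∈ N₁ := by simpa [sub_eq_neg_add] using hx₁
    have hx₂' : x - m₂ ∈ N₂ := by simpa [sub_eq_neg_add] using hx₂
    obtain ⟨I₁, hI₁⟩ := hmul N₁
    obtain ⟨I₂, hI₂⟩ := hmul N₂
    have hcx₁ : N₁ ⊔ Submodule.span R {x} = ⊤ := by
      rw [eq_top_iff, ← hc₁]
      refine sup_le le_sup_left ?_
      rw [Submodule.span_le, Set.singleton_subset_iff]
      have hm₁ : m₁ = x - (x - m₁) := by abel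
      rw [SetLike.mem_coe, hm₁]
      exact Submodule.sub_mem _
        (Submodule.mem_sup_right (Submodule.mem_span_singleton_self x))
        (Submodule.mem_sup_left hx₁')
    have hcx₂ : N₂ ⊔ Submodule.span R {x} = ⊤ := by
      rw [eq_top_iff, ← hc₂]
      refine sup_le le_sup_left ?_
      rw [Submodule.span_le, Set.singleton_subset_iff]
      have hm₂ : m₂ = x - (x - m₂) := by abel
      rw [SetLike.mem_coe, hm₂]
      exact Submodule.sub_mem _
        (Submodule.mem_sup_right (Submodule.mem_span_singleton_self x))
        (Submodule.mem_sup_left hx₂')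
    have key : (N₁ ⊓ N₂) ⊔ Submodule.span R {x} = ⊤ := by
      have h2 : I₂ • N₁ ≤ N₁ ⊓ N₂ := by
        refine le_inf Submodule.smul_le_right ?_
        rw [hI₂]
        exact smul_mono_right I₂ le_top
      have h3 : N₂ = I₂ • N₁ ⊔ I₂ • Submodule.span R {x} := by
        rw [← Submodule.smul_sup, hcx₁, ← hI₂]
      have h4 : N₂ ≤ (N₁ ⊓ N₂) ⊔ Submodule.span R {x} :=
        le_of_eq_of_le h3
          (sup_le (h2.trans le_sup_left) (Submodule.smul_le_right.trans le_sup_right))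
      rw [eq_top_iff, ← hcx₂]
      exact sup_le h4 le_sup_right
    refine ⟨x +ᵥ (↑(N₁ ⊓ N₂) : Set M), ⟨x, N₁ ⊓ N₂, hmi _ _ hN₁ hN₂, key, rfl⟩, ?_, ?_⟩
    · exact ⟨0, Submodule.zero_mem _, by simp⟩
    · rintro y ⟨n, hn, rfl⟩
      have hmem := fun (m : M) (hm : x - m + n ∈ (⊤:Submodule R M)) => hm
      constructor
      · rw [Set.mem_vadd_set_iff_neg_vadd_mem]
        show -m₁ + (x + n) ∈ N₁
        have h : -m₁ + (x + n) = x - m₁ + n := by abel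
        rw [h]
        exact Submodule.add_mem _ hx₁' hn.1
      · rw [Set.mem_vadd_set_iff_neg_vadd_mem]
        show -m₂ + (x + n) ∈ N₂
        have h : -m₂ + (x + n) = x - m₂ + n := by abel
        rw [h]
        exact Submodule.add_mem _ hx₂' hn.2
  · apply Set.eq_univ_of_univ_subset
    have htop : (⊤ : Submodule R M) ≠ ⊥ := by
      intro h
      obtain ⟨a, b, hab⟩ := exists_pair_ne M
      have ha : a ∈ (⊥ : Submodule R M) := h ▸ Submodule.mem_top
      have hb : b ∈ (⊥ : Submodule R M) := h ▸ Submodule.mem_top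
      exact hab ((Submodule.mem_bot R).mp ha ▸ ((Submodule.mem_bot R).mp hb ▸ rfl))
    exact Set.subset_sUnion_of_mem ⟨0, ⊤, htop, by simp, by simp⟩
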